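/- arXiv:1304.3757 — 3 statements merged into one kernel-verified Lean document; each statement's English description precedes it below -/
import Mathlib

section
/- Let H be a complex Hilbert space, E a finite-dimensional subspace, F a subspace of E, and u a unitary operator on H fixing every vector of E^⊥. Then there exists a unique unitary operator v on H such that (i) v fixes every vector of F^⊥ and (ii) the image of H under (u - v) is contained in the image of F^⊥ under (u - 1). -/
open Submodule

local notation "⟪" x ", " y "⟫" => @inner ℂ _ _ x y

private lemma fix_of_inner_aux {H : Type*} [NormedAddCommGroup H] [InnerProductSpace ℂ H]
    (u : H ≃ₗᵢ[ℂ] H) (h : H) (hh : ⟪u h, h⟫ = (‖h‖ : ℂ) ^ 2) : u h = h := by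
  rcases eq_or_ne h 0 with rfl | h0
  · simp
  have h1 : ⟪u h, h⟫ = (‖u h‖ : ℂ) * (‖h‖ : ℂ) := by
    rw [u.norm_map, hh]; ring
  have h2 : (‖h‖ : ℂ) • u h = (‖u h‖ : ℂ) • h := inner_eq_norm_mul_iff.mp h1
  rw [u.norm_map] at h2
  exact smul_right_injective H (Complex.ofReal_ne_zero.mpr (norm_ne_zero_iff.mpr h0)) h2

set_option maxHeartbeats 1000000 in
/-- Projection of unitary operators: if `u` is a unitary operator on a complex
Hilbert space `H` fixing `Eᗮ` pointwise, where `E` is finite-dimensional and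
`F ≤ E`, then there is a unique unitary `v` fixing `Fᗮ` pointwise such that
the range of `u - v` is contained in the image of `Fᗮ` under `u - 1`. -/
theorem existsUnique_projection_of_unitary
    {H : Type*} [NormedAddCommGroup H] [InnerProductSpace ℂ H]
    [CompleteSpace H]
    (E F : Submodule ℂ H) [FiniteDimensional ℂ E] (hFE : F ≤ E)
    (u : H ≃ₗᵢ[ℂ] H) (hu : ∀ x ∈ Eᗮ, u x = x) :
    ∃! v : H ≃ₗᵢ[ℂ] H,
      (∀ x ∈ Fᗮ, v x = x) ∧
      (∀ x : H, ∃ y ∈ Fᗮ, u x - v x = u y - y) := by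
  classical
  haveI : FiniteDimensional ℂ F := Submodule.finiteDimensional_of_le hFE
  set G : Submodule ℂ H := Fᗮ ⊓ E with hGdef
  haveI : FiniteDimensional ℂ G := Submodule.finiteDimensional_of_le (inf_le_right : G ≤ E)
  have hGF : G ≤ Fᗮ := inf_le_left
  have hGE : G ≤ E := inf_le_right
  have hEF : Eᗮ ≤ Fᗮ := Submodule.orthogonal_le hFE
  set pG : H →L[ℂ] G := orthogonalProjection G with hpGdef
  set pF : H →L[ℂ] F := orthogonalProjection F with hpFdef
  set pE : H →L[ℂ] E := orthogonalProjection E with hpEdef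
  set U : H →ₗ[ℂ] H := u.toLinearEquiv.toLinearMap with hUdef
  have hUapp : ∀ x : H, U x = u x := fun _ => rfl
  -- inner product with projections
  have hpG1 : ∀ (z : H) (x : G), ⟪((pG z : H)), (x : H)⟫ = ⟪z, (x : H)⟫ := by
    intro z x
    have h := starProjection_inner_eq_zero z (x : H) x.2
    rw [inner_sub_left, sub_eq_zero] at h
    exact h.symm
  have hpG2 : ∀ (z : H) (x : G), ⟪(x : H), ((pG z : H))⟫ = ⟪(x : H), z⟫ := by
    intro z x
    rw [← inner_conj_symm, hpG1, inner_conj_symm]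
  -- u maps E into E
  have huE : ∀ x ∈ E, u x ∈ E := by
    intro x hx
    have hm : u x ∈ Eᗮᗮ := by
      rw [Submodule.mem_orthogonal]
      intro y hy
      calc ⟪y, u x⟫ = ⟪u y, u x⟫ := by rw [hu y hy]
        _ = ⟪y, x⟫ := u.inner_map_map y x
        _ = 0 := Submodule.inner_left_of_mem_orthogonal hx hy
    rwa [Submodule.orthogonal_orthogonal] at hm
  -- elements of E orthogonal to G lie in F
  have hmemF : ∀ z, z ∈ E → (∀ x : G, ⟪(x : H), z⟫ = 0) → z ∈ F := by
    intro z hzE hzG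
    have hm : z ∈ Fᗮᗮ := by
      rw [Submodule.mem_orthogonal]
      intro y hy
      have h1 : y - (pE y : H) ∈ Eᗮ := sub_starProjection_mem_orthogonal y
      have h2 : (pE y : H) ∈ Fᗮ := by
        have h3 := Fᗮ.sub_mem hy (hEF h1)
        simpa using h3
      have hyG : (pE y : H) ∈ G := ⟨h2, (pE y).2⟩
      have h4 : ⟪(pE y : H), z⟫ = 0 := hzG ⟨(pE y : H), hyG⟩
      have h5 : ⟪y - (pE y : H), z⟫ = 0 := Submodule.inner_left_of_mem_orthogonal hzE h1
      calc ⟪y, z⟫ = ⟪(pE y : H) + (y - (pE y : H)), z⟫ := by rw [add_sub_cancel]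
        _ = ⟪(pE y : H), z⟫ + ⟪y - (pE y : H), z⟫ := inner_add_left _ _ _
        _ = 0 := by rw [h4, h5, add_zero]
    rwa [Submodule.orthogonal_orthogonal] at hm
  -- the operators on the finite-dimensional pieces
  set D : G →ₗ[ℂ] G := pG.toLinearMap ∘ₗ U ∘ₗ G.subtype - LinearMap.id with hDdef
  set c : F →ₗ[ℂ] G := pG.toLinearMap ∘ₗ U ∘ₗ F.subtype with hcdef
  have hDapp : ∀ x : G, D x = pG (u (x : H)) - x := by
    intro x; rw [hDdef]; rfl
  have hcapp : ∀ f : F, c f = pG (u (f : H)) := by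
    intro f; rw [hcdef]; rfl
  clear_value U D c
  -- range condition
  have hrange : ∀ f : F, c f ∈ LinearMap.range D := by
    intro f
    rw [← Submodule.orthogonal_orthogonal (LinearMap.range D), Submodule.mem_orthogonal]
    intro x hx
    have h1 : ⟪D x, x⟫ = 0 := (Submodule.mem_orthogonal _ _).1 hx (D x) ⟨x, rfl⟩
    rw [hDapp, Submodule.coe_inner, Submodule.coe_sub, inner_sub_left, sub_eq_zero, hpG1] at h1
    have hux : u (x : H) = (x : H) := by
      apply fix_of_inner_aux
      rw [h1, inner_self_eq_norm_sq_to_K]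
      rfl
    rw [Submodule.coe_inner, hcapp, hpG2]
    calc ⟪(x : H), u (f : H)⟫ = ⟪u (x : H), u (f : H)⟫ := by rw [hux]
      _ = ⟪(x : H), (f : H)⟫ := u.inner_map_map _ _
      _ = 0 := Submodule.inner_left_of_mem_orthogonal f.2 (hGF x.2)
  -- lift to get t
  obtain ⟨t, ht⟩ := Module.projective_lifting_property D.rangeRestrict
    (c.codRestrict (LinearMap.range D) hrange) D.surjective_rangeRestrict
  have htf : ∀ f : F, D (t f) = c f := by
    intro f
    exact Subtype.ext_iff.mp (LinearMap.congr_fun ht f)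
  -- key identity in inner-product form
  have hkey : ∀ (f : F) (x : G),
      ⟪u ((t f : G) : H), (x : H)⟫ - ⟪((t f : G) : H), (x : H)⟫ = ⟪u (f : H), (x : H)⟫ := by
    intro f x
    have h1 := congrArg (fun z : G => ⟪(z : H), (x : H)⟫) (htf f)
    simp only [hDapp, hcapp, Submodule.coe_sub, inner_sub_left] at h1
    rw [hpG1, hpG1] at h1
    exact h1
  -- the map vF on F
  set vF : F →ₗ[ℂ] H := U ∘ₗ (F.subtype - G.subtype ∘ₗ t) + G.subtype ∘ₗ t with hvFdef
  have hvFapp : ∀ f : F, vF f = u ((f : H) - ((t f : G) : H)) + ((t f : G) : H) := by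
    intro f
    rw [hvFdef]
    simp only [LinearMap.add_apply, LinearMap.comp_apply, LinearMap.sub_apply,
      Submodule.coe_subtype, hUapp]
  clear_value vF
  -- vF f is orthogonal to G
  have hvFG : ∀ (f : F) (x : G), ⟪vF f, (x : H)⟫ = 0 := by
    intro f x
    rw [hvFapp, inner_add_left, map_sub, inner_sub_left]
    have := hkey f x
    linear_combination -this
  -- vF f lies in F
  have hvFmem : ∀ f : F, vF f ∈ F := by
    intro f
    have hE1 : vF f ∈ E := by
      rw [hvFapp]
      exact E.add_mem (huE _ (E.sub_mem (hFE f.2) (hGE (t f).2))) (hGE (t f).2)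
    refine hmemF _ hE1 ?_
    intro x
    rw [← inner_conj_symm, hvFG f x]
    exact map_zero _
  -- orthogonal norm splitting
  have hsplit : ∀ a b : H, a ∈ F → b ∈ Fᗮ → ‖a + b‖ * ‖a + b‖ = ‖a‖ * ‖a‖ + ‖b‖ * ‖b‖ := by
    intro a b ha hb
    exact norm_add_sq_eq_norm_sq_add_norm_sq_of_inner_eq_zero a b
      (Submodule.inner_right_of_mem_orthogonal ha hb)
  -- vF is norm preserving
  have hvFnorm : ∀ f : F, ‖vF f‖ = ‖(f : H)‖ := by
    intro f
    have h1 : vF f - ((t f : G) : H) = u ((f : H) - ((t f : G) : H)) := by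
      rw [hvFapp]; abel
    have h2 := hsplit (vF f) (-((t f : G) : H)) (hvFmem f) (Fᗮ.neg_mem (hGF (t f).2))
    have h3 := hsplit ((f : H)) (-((t f : G) : H)) f.2 (Fᗮ.neg_mem (hGF (t f).2))
    rw [← sub_eq_add_neg, h1, u.norm_map, norm_neg] at h2
    rw [← sub_eq_add_neg, norm_neg] at h3
    rw [h3] at h2
    have h7 : ‖vF f‖ * ‖vF f‖ = ‖(f : H)‖ * ‖(f : H)‖ := by linarith
    exact (mul_self_inj (norm_nonneg _) (norm_nonneg _)).mp h7
  -- corestriction of vF to F and its surjectivity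
  set w : F →ₗ[ℂ] F := vF.codRestrict F hvFmem with hwdef
  have hwapp : ∀ f : F, ((w f : F) : H) = vF f := fun f => rfl
  clear_value w
  have hwsurj : Function.Surjective w := by
    rw [← LinearMap.injective_iff_surjective]
    intro a b hab
    have h0 : vF a = vF b := by rw [← hwapp, ← hwapp, hab]
    have h1 : ‖((a - b : F) : H)‖ = 0 := by
      rw [← hvFnorm (a - b), map_sub, h0, sub_self, norm_zero]
    have h2 : ((a - b : F) : H) = 0 := norm_eq_zero.mp h1
    have h3 : (a - b : F) = 0 := by exact_mod_cast h2
    exact sub_eq_zero.mp h3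
  -- the global map V
  set V : H →ₗ[ℂ] H := vF ∘ₗ pF.toLinearMap + (LinearMap.id - F.subtype ∘ₗ pF.toLinearMap)
    with hVdef
  have hVapp : ∀ x : H, V x = vF (pF x) + (x - ((pF x : F) : H)) := by
    intro x; rw [hVdef]; rfl
  clear_value V
  have hVnorm : ∀ x : H, ‖V x‖ = ‖x‖ := by
    intro x
    have hb : x - ((pF x : F) : H) ∈ Fᗮ := sub_starProjection_mem_orthogonal x
    have h2 := hsplit _ _ (hvFmem (pF x)) hb
    have h3 := hsplit ((pF x : F) : H) _ (pF x).2 hb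
    have h5 : ((pF x : F) : H) + (x - ((pF x : F) : H)) = x := by abel
    rw [h5] at h3
    have h4 := hvFnorm (pF x)
    rw [hVapp]
    have h6 : ‖vF (pF x) + (x - ((pF x : F) : H))‖ * ‖vF (pF x) + (x - ((pF x : F) : H))‖
        = ‖x‖ * ‖x‖ := by rw [h2, h4, ← h3]
    exact (mul_self_inj (norm_nonneg _) (norm_nonneg _)).mp h6
  have hVsurj : Function.Surjective V := by
    intro z
    obtain ⟨f', hf'⟩ := hwsurj (pF z)
    refine ⟨(f' : H) + (z - ((pF z : F) : H)), ?_⟩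
    have hp0 : pF (z - ((pF z : F) : H)) = 0 :=
      Submodule.orthogonalProjectionOnto_apply_of_mem_orthogonal
        (sub_starProjection_mem_orthogonal z)
    have hp1 : pF ((f' : H)) = f' := orthogonalProjection_mem_subspace_eq_self f'
    have hp : pF ((f' : H) + (z - ((pF z : F) : H))) = f' := by
      rw [map_add, hp1, hp0, add_zero]
    have hvf' : vF f' = ((pF z : F) : H) := by rw [← hwapp, hf']
    rw [hVapp, hp, hvf']
    abel
  -- the unitary v
  set v : H ≃ₗᵢ[ℂ] H := LinearIsometryEquiv.ofSurjective ⟨V, hVnorm⟩ hVsurj with hvdef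
  have hvapp : ∀ x : H, v x = V x := fun x => rfl
  clear_value v
  -- v fixes Fᗮ pointwise
  have hvfix : ∀ x ∈ Fᗮ, v x = x := by
    intro x hx
    have hp0 : pF x = 0 := Submodule.orthogonalProjectionOnto_apply_of_mem_orthogonal hx
    rw [hvapp, hVapp, hp0]
    simp
  -- projections to E of elements of Fᗮ lie in G
  have hmemG_pE : ∀ r ∈ Fᗮ, ((pE r : E) : H) ∈ G := by
    intro r hr
    refine ⟨?_, (pE r).2⟩
    have h1 : r - (r - (pE r : H)) ∈ Fᗮ := Fᗮ.sub_mem hr (hEF (sub_starProjection_mem_orthogonal r))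
    simpa using h1
  have hfixdiff : ∀ r ∈ Fᗮ, u r - r = u ((pE r : E) : H) - ((pE r : E) : H) := by
    intro r hr
    have h1 : u (r - ((pE r : E) : H)) = r - ((pE r : E) : H) :=
      hu _ (sub_starProjection_mem_orthogonal r)
    rw [map_sub] at h1
    rw [sub_eq_sub_iff_sub_eq_sub]
    exact h1
  -- the range property of v
  have hvrange : ∀ x : H, ∃ y ∈ Fᗮ, u x - v x = u y - y := by
    intro x
    have hr : x - ((pF x : F) : H) ∈ Fᗮ := sub_starProjection_mem_orthogonal x
    refine ⟨((t (pF x) : G) : H) + ((pE (x - ((pF x : F) : H)) : E) : H),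
      Fᗮ.add_mem (hGF (t (pF x)).2) (hGF (hmemG_pE _ hr)), ?_⟩
    have hA : v x = u (((pF x : F) : H) - ((t (pF x) : G) : H)) + ((t (pF x) : G) : H)
        + (x - ((pF x : F) : H)) := by
      rw [hvapp, hVapp, hvFapp]
    have hB : u x = u ((pF x : F) : H) + u (x - ((pF x : F) : H)) := by
      rw [← map_add]; congr 1; abel
    have hC := hfixdiff _ hr
    have hC' : u (x - ((pF x : F) : H)) =
        u ((pE (x - ((pF x : F) : H)) : E) : H) - ((pE (x - ((pF x : F) : H)) : E) : H)
        + (x - ((pF x : F) : H)) := sub_eq_iff_eq_add.mp hC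
    rw [map_add u, hA, map_sub u ((pF x : F) : H) ((t (pF x) : G) : H), hB, hC']
    abel
  -- v on F agrees with vF
  have hvF0 : ∀ f : F, v (f : H) = vF f := by
    intro f
    have hp1 : pF ((f : H)) = f := orthogonalProjection_mem_subspace_eq_self f
    rw [hvapp, hVapp, hp1]
    simp
  refine ⟨v, ⟨hvfix, hvrange⟩, ?_⟩
  rintro v' ⟨hfix', hrange'⟩
  have hv'mem : ∀ f : F, v' (f : H) ∈ F := by
    intro f
    have hm : v' (f : H) ∈ Fᗮᗮ := by
      rw [Submodule.mem_orthogonal]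
      intro z hz
      calc ⟪z, v' (f : H)⟫ = ⟪v' z, v' (f : H)⟫ := by rw [hfix' z hz]
        _ = ⟪z, (f : H)⟫ := v'.inner_map_map _ _
        _ = 0 := Submodule.inner_left_of_mem_orthogonal f.2 hz
    rwa [Submodule.orthogonal_orthogonal] at hm
  have keyF : ∀ f : F, v' (f : H) = vF f := by
    intro f
    obtain ⟨y, hy, hy2⟩ := hrange' (f : H)
    have hgG : ((pE y : E) : H) ∈ G := hmemG_pE y hy
    have huy : u y - y = u ((pE y : E) : H) - ((pE y : E) : H) := hfixdiff y hy
    have hv'f : v' (f : H) = u (f : H) - (u ((pE y : E) : H) - ((pE y : E) : H)) := by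
      rw [← huy, ← hy2]; abel
    have hdiff : vF f - v' (f : H) =
        u (((pE y : E) : H) - ((t f : G) : H)) - (((pE y : E) : H) - ((t f : G) : H)) := by
      rw [hv'f, hvFapp, map_sub, map_sub]
      abel
    have hmemdiff : vF f - v' (f : H) ∈ F := F.sub_mem (hvFmem f) (hv'mem f)
    set h0 : H := ((pE y : E) : H) - ((t f : G) : H) with hh0
    have hh0G : h0 ∈ G := G.sub_mem hgG (t f).2
    have hinner0 : ⟪u h0 - h0, h0⟫ = 0 := by
      rw [← hdiff]
      exact Submodule.inner_right_of_mem_orthogonal hmemdiff (hGF hh0G)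
    have hinner : ⟪u h0, h0⟫ = (‖h0‖ : ℂ) ^ 2 := by
      rw [inner_sub_left, sub_eq_zero] at hinner0
      rw [hinner0, inner_self_eq_norm_sq_to_K]
      rfl
    have hfix0 : u h0 = h0 := fix_of_inner_aux u h0 hinner
    have hz : vF f - v' (f : H) = 0 := by rw [hdiff, hfix0, sub_self]
    exact (sub_eq_zero.mp hz).symm
  refine LinearIsometryEquiv.ext fun x => ?_
  have hr : x - ((pF x : F) : H) ∈ Fᗮ := sub_starProjection_mem_orthogonal x
  have hxx : x = ((pF x : F) : H) + (x - ((pF x : F) : H)) := by abel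
  calc v' x = v' (((pF x : F) : H) + (x - ((pF x : F) : H))) := by rw [← hxx]
    _ = v' ((pF x : F) : H) + v' (x - ((pF x : F) : H)) := map_add _ _ _
    _ = vF (pF x) + (x - ((pF x : F) : H)) := by rw [keyF, hfix' _ hr]
    _ = v ((pF x : F) : H) + v (x - ((pF x : F) : H)) := by rw [hvF0, hvfix _ hr]
    _ = v x := by rw [← map_add, ← hxx]
end

section
/- With the notation of the projection of unitary operators: if G ⊆ F ⊆ E are subspaces of a complex Hilbert space H with E finite-dimensional, and u is a unitary operator fixing E^⊥ pointwise, then π_{F,G}(π_{E,F}(u)) = π_{E,G}(u). -/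
/-- Tower property of the projection of unitary operators: if `v = π_{E,F}(u)`
and `w = π_{F,G}(v)` for subspaces `G ⊆ F ⊆ E` with `E` finite-dimensional,
then `w = π_{E,G}(u)`, i.e. `w` fixes `Gᗮ` pointwise and the range of `u - w`
is contained in the image of `Gᗮ` under `u - 1`. -/
theorem projection_of_unitary_tower
    {H : Type*} [NormedAddCommGroup H] [InnerProductSpace ℂ H]
    [CompleteSpace H]
    (E F G : Submodule ℂ H) [FiniteDimensional ℂ E]
    (hGF : G ≤ F) (hFE : F ≤ E)
    (u v w : H ≃ₗᵢ[ℂ] H)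
    (hu : ∀ x ∈ Eᗮ, u x = x)
    (hv₁ : ∀ x ∈ Fᗮ, v x = x)
    (hv₂ : ∀ x : H, ∃ y ∈ Fᗮ, u x - v x = u y - y)
    (hw₁ : ∀ x ∈ Gᗮ, w x = x)
    (hw₂ : ∀ x : H, ∃ y ∈ Gᗮ, v x - w x = v y - y) :
    ∀ x : H, ∃ y ∈ Gᗮ, u x - w x = u y - y := by
  intro x
  obtain ⟨z, hz, hz'⟩ := hv₂ x
  obtain ⟨y1, hy1, hy1'⟩ := hw₂ x
  obtain ⟨z1, hz1, hz1'⟩ := hv₂ y1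
  have hFG : Fᗮ ≤ Gᗮ := Submodule.orthogonal_le hGF
  refine ⟨z + y1 - z1, ?_, ?_⟩
  · exact Submodule.sub_mem _ (Submodule.add_mem _ (hFG hz) hy1) (hFG hz1)
  · have := u.map_add z y1
    simp only [map_sub, map_add]
    have hv1 : v y1 = u y1 - (u z1 - z1) := by
      rw [← hz1']; abel
    rw [← sub_add_sub_cancel (u x) (v x) (w x), hz', hy1', hv1]
    abel
end

section
/- In the setting of the spectral recursion for virtual isometries, the rational function Φ(z) = Σ_{j=1}^n |μ_j|² λ_j/(λ_j - z) + |ν-1|²/(1-z) - (1 - conj(ν)) takes only purely imaginary values (or ∞) on the unit circle, using the identity Σ_j |μ_j|² + |ν|² = 1; consequently its roots on the unit circle strictly interlace with {λ_1,...,λ_n, 1}. -/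
open Finset Real Complex

section PhiAux
open Filter Topology Set Real

private lemma sin_half_ne (x : ℝ) (h1 : -(2*π) < x) (h2 : x < 2*π) (h3 : x ≠ 0) :
    Real.sin (x/2) ≠ 0 := by
  rcases lt_or_gt_of_ne h3 with h | h
  · have : 0 < Real.sin (-(x/2)) :=
      Real.sin_pos_of_pos_of_lt_pi (by linarith) (by nlinarith [Real.pi_pos])
    rw [Real.sin_neg] at this; linarith
  · have : 0 < Real.sin (x/2) :=
      Real.sin_pos_of_pos_of_lt_pi (by linarith) (by nlinarith [Real.pi_pos])
    linarith

-- derivative of cot((t - p)/2)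
private lemma hasDerivAt_cotp (p t : ℝ) (hs : Real.sin ((t - p)/2) ≠ 0) :
    HasDerivAt (fun t => Real.cos ((t - p)/2) / Real.sin ((t - p)/2))
      (-(1/2) / Real.sin ((t - p)/2)^2) t := by
  have hu : HasDerivAt (fun t : ℝ => (t - p)/2) (1/2) t := by
    simpa using ((hasDerivAt_id t).sub_const p).div_const 2
  have hc : HasDerivAt (fun t : ℝ => Real.cos ((t - p)/2)) (-Real.sin ((t-p)/2) * (1/2)) t :=
    (Real.hasDerivAt_cos _).comp t hu
  have hsn : HasDerivAt (fun t : ℝ => Real.sin ((t - p)/2)) (Real.cos ((t-p)/2) * (1/2)) t :=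
    (Real.hasDerivAt_sin _).comp t hu
  have := hc.fun_div hsn hs
  refine this.congr_deriv ?_
  have h2 := Real.sin_sq_add_cos_sq ((t-p)/2)
  rw [div_left_inj' (pow_ne_zero 2 hs)]
  nlinarith [h2]

-- cot limits
private lemma cot_tendsto_top : Tendsto (fun x : ℝ => Real.cos x / Real.sin x) (𝓝[>] 0) atTop := by
  have hcos : Tendsto (fun x : ℝ => Real.cos x) (𝓝[>] 0) (𝓝 1) := by
    simpa using (Real.continuous_cos.continuousAt (x := 0)).continuousWithinAt.tendsto
  have hsin : Tendsto (fun x : ℝ => Real.sin x) (𝓝[>] 0) (𝓝[>] 0) := by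
    apply tendsto_nhdsWithin_of_tendsto_nhds_of_eventually_within
    · simpa using (Real.continuous_sin.continuousAt (x := 0)).continuousWithinAt.tendsto
    · filter_upwards [Ioo_mem_nhdsGT_of_mem (Set.mem_Ico.2 ⟨le_refl 0, Real.pi_pos⟩)] with x hx
      exact Real.sin_pos_of_pos_of_lt_pi hx.1 hx.2
  simpa [div_eq_mul_inv] using Tendsto.pos_mul_atTop one_pos hcos hsin.inv_tendsto_nhdsGT_zero

private lemma cot_tendsto_bot0 : Tendsto (fun x : ℝ => Real.cos x / Real.sin x) (𝓝[<] 0) atBot := by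
  have hcos : Tendsto (fun x : ℝ => Real.cos x) (𝓝[<] 0) (𝓝 1) := by
    simpa using (Real.continuous_cos.tendsto 0).mono_left nhdsWithin_le_nhds
  have hsin : Tendsto (fun x : ℝ => -Real.sin x) (𝓝[<] 0) (𝓝[>] 0) := by
    apply tendsto_nhdsWithin_of_tendsto_nhds_of_eventually_within
    · simpa using ((Real.continuous_sin.tendsto 0).neg).mono_left nhdsWithin_le_nhds
    · filter_upwards [Ioo_mem_nhdsLT_of_mem (a := -π)
        (Set.mem_Ioc.2 ⟨by linarith [Real.pi_pos], le_refl 0⟩)] with x hx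
      have : 0 < Real.sin (-x) :=
        Real.sin_pos_of_pos_of_lt_pi (by linarith [hx.2]) (by linarith [hx.1])
      rw [Real.sin_neg] at this
      simpa using this
  have h1 : Tendsto (fun x : ℝ => Real.cos x * (-Real.sin x)⁻¹) (𝓝[<] 0) atTop :=
    Tendsto.pos_mul_atTop one_pos hcos hsin.inv_tendsto_nhdsGT_zero
  have h2 := tendsto_neg_atTop_atBot.comp h1
  refine h2.congr (fun x => ?_)
  simp [Function.comp]
  field_simp

private lemma cot_tendsto_botpi : Tendsto (fun x : ℝ => Real.cos x / Real.sin x) (𝓝[<] π) atBot := by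
  have hcos : Tendsto (fun x : ℝ => Real.cos x) (𝓝[<] π) (𝓝 (-1)) := by
    have := (Real.continuous_cos.tendsto π).mono_left (nhdsWithin_le_nhds (s := Set.Iio π))
    simpa [Real.cos_pi] using this
  have hsin : Tendsto (fun x : ℝ => Real.sin x) (𝓝[<] π) (𝓝[>] 0) := by
    apply tendsto_nhdsWithin_of_tendsto_nhds_of_eventually_within
    · have := (Real.continuous_sin.tendsto π).mono_left (nhdsWithin_le_nhds (s := Set.Iio π))
      simpa [Real.sin_pi] using this
    · filter_upwards [Ioo_mem_nhdsLT_of_mem (a := (0:ℝ))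
        (Set.mem_Ioc.2 ⟨Real.pi_pos, le_refl π⟩)] with x hx
      exact Real.sin_pos_of_pos_of_lt_pi hx.1 hx.2
  simpa [div_eq_mul_inv] using
    Tendsto.neg_mul_atTop (by norm_num : (-1:ℝ) < 0) hcos hsin.inv_tendsto_nhdsGT_zero

private lemma core (m : ℕ) (a p : Fin m → ℝ) (ha : ∀ k, 0 < a k) (C α β : ℝ)
    (hαβ : α < β)
    (h1 : ∀ k, p k ≤ α ∨ β ≤ p k)
    (h2 : ∀ k, β ≤ p k + 2*π)
    (h3 : ∀ k, p k < α + 2*π)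
    (h4 : ∃ k₀, p k₀ = α ∧ ∀ k, k ≠ k₀ → p k ≠ α)
    (h5 : ∃ k₁, (p k₁ = β ∨ p k₁ = β - 2*π) ∧ ∀ k, k ≠ k₁ → p k ≠ β ∧ p k ≠ β - 2*π) :
    ∃! t, t ∈ Set.Ioo α β ∧
      (∑ k, a k * (Real.cos ((t - p k)/2) / Real.sin ((t - p k)/2))) + C = 0 := by
  obtain ⟨k₀, hk₀, hk₀'⟩ := h4
  obtain ⟨k₁, hk₁, hk₁'⟩ := h5
  set f : ℝ → ℝ := fun t =>
    (∑ k, a k * (Real.cos ((t - p k)/2) / Real.sin ((t - p k)/2))) + C with hf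
  -- nonvanishing of sines inside
  have hsin : ∀ t ∈ Set.Ioo α β, ∀ k, Real.sin ((t - p k)/2) ≠ 0 := by
    intro t ht k
    refine sin_half_ne _ (by linarith [h3 k, ht.1]) (by linarith [h2 k, ht.2]) ?_
    rcases h1 k with h | h
    · have : p k < t := lt_of_le_of_lt h ht.1; intro hc; linarith [sub_eq_zero.1 hc]
    · have : t < p k := lt_of_lt_of_le ht.2 h; intro hc; linarith [sub_eq_zero.1 hc]
  -- derivative
  have hderiv : ∀ t ∈ Set.Ioo α β,
      HasDerivAt f (∑ k, a k * (-(1/2) / Real.sin ((t - p k)/2)^2)) t := by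
    intro t ht
    have : HasDerivAt (fun t => ∑ k, a k * (Real.cos ((t - p k)/2) / Real.sin ((t - p k)/2)))
        (∑ k, a k * (-(1/2) / Real.sin ((t - p k)/2)^2)) t := by
      apply HasDerivAt.fun_sum
      intro k _
      have hu : HasDerivAt (fun t : ℝ => (t - p k)/2) (1/2) t := by
        simpa using ((hasDerivAt_id t).sub_const (p k)).div_const 2
      have hc : HasDerivAt (fun t : ℝ => Real.cos ((t - p k)/2))
          (-Real.sin ((t - p k)/2) * (1/2)) t := (Real.hasDerivAt_cos _).comp t hu
      have hsn : HasDerivAt (fun t : ℝ => Real.sin ((t - p k)/2))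
          (Real.cos ((t - p k)/2) * (1/2)) t := (Real.hasDerivAt_sin _).comp t hu
      have hd := (hc.fun_div hsn (hsin t ht k)).const_mul (a k)
      refine hd.congr_deriv ?_
      have h2 := Real.sin_sq_add_cos_sq ((t - p k)/2)
      have hnum : (-Real.sin ((t - p k)/2) * (1/2) * Real.sin ((t - p k)/2)
          - Real.cos ((t - p k)/2) * (Real.cos ((t - p k)/2) * (1/2))) = -(1/2) := by nlinarith [h2]
      rw [hnum]
    simpa [hf] using this.add_const C
  have hne0 : Nonempty (Fin m) := ⟨k₀⟩
  -- strict anti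
  have hanti : StrictAntiOn f (Set.Ioo α β) := by
    apply strictAntiOn_of_deriv_neg (convex_Ioo α β)
    · exact fun t ht => ((hderiv t ht).continuousAt).continuousWithinAt
    · intro t ht
      rw [interior_Ioo] at ht
      rw [(hderiv t ht).deriv]
      apply Finset.sum_neg _ Finset.univ_nonempty
      intro k _
      have hs2 : 0 < Real.sin ((t - p k)/2)^2 := pow_two_pos_of_ne_zero (hsin t ht k)
      have := ha k
      have : a k * (-(1/2) / Real.sin ((t - p k)/2)^2) < 0 := by
        apply mul_neg_of_pos_of_neg (ha k)
        exact div_neg_of_neg_of_pos (by norm_num) hs2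
      exact this
  -- rest function and split
  set R : ℝ → ℝ := fun t =>
    (∑ k ∈ Finset.univ.erase k₀, a k * (Real.cos ((t - p k)/2) / Real.sin ((t - p k)/2))) + C with hR
  have hsplit : ∀ t, f t = R t + a k₀ * (Real.cos ((t - p k₀)/2) / Real.sin ((t - p k₀)/2)) := by
    intro t
    simp only [hf, hR]
    rw [← Finset.add_sum_erase _ _ (Finset.mem_univ k₀)]
    ring
  set R₁ : ℝ → ℝ := fun t =>
    (∑ k ∈ Finset.univ.erase k₁, a k * (Real.cos ((t - p k)/2) / Real.sin ((t - p k)/2))) + C with hR₁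
  have hsplit₁ : ∀ t, f t = R₁ t + a k₁ * (Real.cos ((t - p k₁)/2) / Real.sin ((t - p k₁)/2)) := by
    intro t
    simp only [hf, hR₁]
    rw [← Finset.add_sum_erase _ _ (Finset.mem_univ k₁)]
    ring
  have two_pi_pos : (0:ℝ) < 2*π := by positivity
  -- continuity of rests
  have hRcont : Tendsto R (𝓝 α) (𝓝 (R α)) := by
    apply Tendsto.add _ tendsto_const_nhds
    apply tendsto_finset_sum
    intro k hk
    have hkne : k ≠ k₀ := (Finset.mem_erase.1 hk).1
    have hne : Real.sin ((α - p k)/2) ≠ 0 := by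
      refine sin_half_ne _ (by linarith [h3 k]) (by linarith [h2 k]) ?_
      intro hc
      exact hk₀' k hkne (by linarith [sub_eq_zero.1 hc])
    have hu : ContinuousAt (fun t : ℝ => (t - p k)/2) α := by fun_prop
    exact (continuousAt_const.mul
      ((Real.continuous_cos.continuousAt.comp hu).div (Real.continuous_sin.continuousAt.comp hu) hne)).tendsto
  have hRcont₁ : Tendsto R₁ (𝓝 β) (𝓝 (R₁ β)) := by
    apply Tendsto.add _ tendsto_const_nhds
    apply tendsto_finset_sum
    intro k hk
    have hkne : k ≠ k₁ := (Finset.mem_erase.1 hk).1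
    have hne : Real.sin ((β - p k)/2) ≠ 0 := by
      have h2k : β - 2*π ≤ p k := by linarith [h2 k]
      have h2k' : β - 2*π ≠ p k := fun hc => (hk₁' k hkne).2 hc.symm
      refine sin_half_ne _ (by linarith [h3 k]) (by rcases lt_or_eq_of_le h2k with h|h; linarith; exact absurd h h2k') ?_
      intro hc
      exact (hk₁' k hkne).1 (by linarith [sub_eq_zero.1 hc])
    have hu : ContinuousAt (fun t : ℝ => (t - p k)/2) β := by fun_prop
    exact (continuousAt_const.mul
      ((Real.continuous_cos.continuousAt.comp hu).div (Real.continuous_sin.continuousAt.comp hu) hne)).tendsto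
  -- tendsto atTop at α⁺
  have hmapα : Tendsto (fun t : ℝ => (t - p k₀)/2) (𝓝[>] α) (𝓝[>] 0) := by
    apply tendsto_nhdsWithin_of_tendsto_nhds_of_eventually_within
    · rw [hk₀]
      have : ContinuousAt (fun t : ℝ => (t - α)/2) α := by fun_prop
      simpa using this.tendsto.mono_left nhdsWithin_le_nhds
    · filter_upwards [self_mem_nhdsWithin] with t ht
      rw [hk₀]
      simp only [Set.mem_Ioi] at ht ⊢
      linarith
  have Htop : Tendsto f (𝓝[>] α) atTop := by
    have hpole : Tendsto (fun t => a k₀ * (Real.cos ((t - p k₀)/2) / Real.sin ((t - p k₀)/2)))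
        (𝓝[>] α) atTop :=
      Tendsto.const_mul_atTop (ha k₀) (cot_tendsto_top.comp hmapα)
    have := Tendsto.add_atTop (f := R) (hRcont.mono_left nhdsWithin_le_nhds) hpole
    exact this.congr (fun t => (hsplit t).symm)
  -- tendsto atBot at β⁻
  have Hbot : Tendsto f (𝓝[<] β) atBot := by
    have hpole : Tendsto (fun t => Real.cos ((t - p k₁)/2) / Real.sin ((t - p k₁)/2))
        (𝓝[<] β) atBot := by
      rcases hk₁ with h | h
      · have hmapβ : Tendsto (fun t : ℝ => (t - p k₁)/2) (𝓝[<] β) (𝓝[<] 0) := by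
          apply tendsto_nhdsWithin_of_tendsto_nhds_of_eventually_within
          · rw [h]
            have : ContinuousAt (fun t : ℝ => (t - β)/2) β := by fun_prop
            simpa using this.tendsto.mono_left nhdsWithin_le_nhds
          · filter_upwards [self_mem_nhdsWithin] with t ht
            rw [h]
            simp only [Set.mem_Iio] at ht ⊢
            linarith
        exact cot_tendsto_bot0.comp hmapβ
      · have hmapβ : Tendsto (fun t : ℝ => (t - p k₁)/2) (𝓝[<] β) (𝓝[<] π) := by
          apply tendsto_nhdsWithin_of_tendsto_nhds_of_eventually_within
          · rw [h]
            have hc : ContinuousAt (fun t : ℝ => (t - (β - 2*π))/2) β := by fun_prop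
            have h0 := hc.tendsto.mono_left (nhdsWithin_le_nhds (s := Set.Iio β))
            have h1 : (β - (β - 2*π))/2 = π := by ring
            rwa [h1] at h0
          · filter_upwards [self_mem_nhdsWithin] with t ht
            rw [h]
            simp only [Set.mem_Iio] at ht ⊢
            linarith
        exact cot_tendsto_botpi.comp hmapβ
    have hpole' : Tendsto (fun t => a k₁ * (Real.cos ((t - p k₁)/2) / Real.sin ((t - p k₁)/2)))
        (𝓝[<] β) atBot := Tendsto.const_mul_atBot (ha k₁) hpole
    have := Tendsto.add_atBot (f := R₁) (hRcont₁.mono_left nhdsWithin_le_nhds) hpole'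
    exact this.congr (fun t => (hsplit₁ t).symm)
  -- pick witnesses
  have hmid1 : α < (α+β)/2 := by linarith
  have hmid2 : (α+β)/2 < β := by linarith
  obtain ⟨t₁, hf1, ht₁⟩ : ∃ t, 0 < f t ∧ t ∈ Set.Ioo α ((α+β)/2) :=
    ((Htop.eventually (eventually_gt_atTop 0)).and
      (eventually_of_mem (Ioo_mem_nhdsGT_of_mem ⟨le_refl α, hmid1⟩) (fun _ h => h))).exists
  obtain ⟨t₂, hf2, ht₂⟩ : ∃ t, f t < 0 ∧ t ∈ Set.Ioo ((α+β)/2) β :=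
    ((Hbot.eventually (eventually_lt_atBot 0)).and
      (eventually_of_mem (Ioo_mem_nhdsLT_of_mem ⟨hmid2, le_refl β⟩) (fun _ h => h))).exists
  have ht₁₂ : t₁ < t₂ := lt_trans ht₁.2 ht₂.1
  have ht₁Ioo : t₁ ∈ Set.Ioo α β := ⟨ht₁.1, lt_trans ht₁.2 hmid2⟩
  have ht₂Ioo : t₂ ∈ Set.Ioo α β := ⟨lt_trans hmid1 ht₂.1, ht₂.2⟩
  have hIccsub : Set.Icc t₁ t₂ ⊆ Set.Ioo α β := fun t ht =>
    ⟨lt_of_lt_of_le ht₁Ioo.1 ht.1, lt_of_le_of_lt ht.2 ht₂Ioo.2⟩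
  have hcontIcc : ContinuousOn f (Set.Icc t₁ t₂) := fun t ht =>
    ((hderiv t (hIccsub ht)).continuousAt).continuousWithinAt
  obtain ⟨t₀, ht₀mem, ht₀eq⟩ := intermediate_value_Icc' (le_of_lt ht₁₂) hcontIcc
    (Set.mem_Icc.2 ⟨le_of_lt hf2, le_of_lt hf1⟩)
  have ht₀Ioo : t₀ ∈ Set.Ioo α β := hIccsub ht₀mem
  refine ⟨t₀, ⟨ht₀Ioo, ht₀eq⟩, ?_⟩
  rintro t' ⟨ht'Ioo, ht'eq⟩
  have hft' : f t' = 0 := ht'eq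
  exact hanti.injOn ht'Ioo ht₀Ioo (by rw [hft', ht₀eq])

end PhiAux

section PhiAux2
open Complex Finset

private lemma Lcot (s : ℝ) (hs : Real.sin (s/2) ≠ 0) :
    (1:ℂ)/(1 - Complex.exp (Complex.I * s)) =
      1/2 + (Complex.I/2) * ((Real.cos (s/2) / Real.sin (s/2) : ℝ) : ℂ) := by
  set u : ℂ := Complex.exp ((s/2 : ℝ) * Complex.I) with hu
  have hu0 : u ≠ 0 := Complex.exp_ne_zero _
  have hexp : Complex.exp (Complex.I * s) = u^2 := by
    rw [hu, ← Complex.exp_nat_mul]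
    congr 1
    push_cast
    ring
  have hsin : (Real.sin (s/2) : ℂ) = (u⁻¹ - u) * Complex.I / 2 := by
    rw [Complex.ofReal_sin, Complex.sin, hu, ← Complex.exp_neg]
    norm_num
  have hcos : (Real.cos (s/2) : ℂ) = (u + u⁻¹) / 2 := by
    rw [Complex.ofReal_cos, Complex.cos, hu, ← Complex.exp_neg]
    norm_num
  have hsne : ((Real.sin (s/2) : ℝ) : ℂ) ≠ 0 := Complex.ofReal_ne_zero.2 hs
  have hune : u⁻¹ - u ≠ 0 := by
    intro hc
    apply hsne
    rw [hsin, hc]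
    simp
  have h1mu : (1:ℂ) - u^2 ≠ 0 := by
    intro hc
    apply hune
    have : u * (u⁻¹ - u) = 1 - u^2 := by field_simp
    have := hc ▸ this
    exact (mul_eq_zero.1 this).resolve_left hu0
  have hcot : ((Real.cos (s/2) / Real.sin (s/2) : ℝ) : ℂ) = -Complex.I * (u^2+1)/(1-u^2) := by
    rw [Complex.ofReal_div, hsin, hcos]
    have hI := Complex.I_sq
    have hd1 : (u⁻¹ - u) * Complex.I / 2 ≠ 0 := by
      intro hc
      apply hune
      have h2 : ((u⁻¹ - u) * Complex.I / 2) * (2 * (-Complex.I)) = u⁻¹ - u := by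
        field_simp
        ring_nf
        rw [hI]
        ring
      rw [hc] at h2
      simpa using h2.symm
    rw [div_eq_div_iff hd1 h1mu]
    field_simp [hu0]
    ring_nf
    rw [hI]
    ring
  rw [hexp, hcot]
  have hI := Complex.I_sq
  field_simp
  ring_nf
  rw [hI]
  ring

private lemma hne1 (s : ℝ) (hs : Real.sin (s/2) ≠ 0) :
    (1:ℂ) - Complex.exp (Complex.I * s) ≠ 0 := by
  intro hc
  rw [sub_eq_zero] at hc
  obtain ⟨m, hm⟩ := Complex.exp_eq_one_iff.1 hc.symm
  apply hs
  have hs2 : (s : ℂ) = m * (2 * Real.pi) := by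
    have h' : Complex.I * s = Complex.I * (m * (2 * Real.pi)) := by rw [hm]; ring
    exact mul_left_cancel₀ Complex.I_ne_zero h'
  have : s = m * (2 * Real.pi) := by exact_mod_cast hs2
  rw [this, show (m : ℝ) * (2 * Real.pi) / 2 = m * Real.pi by ring]
  exact Real.sin_int_mul_pi m

private lemma frac2 (a t : ℝ) :
    Complex.exp (Complex.I * a) / (Complex.exp (Complex.I * a) - Complex.exp (Complex.I * t)) =
      1 / (1 - Complex.exp (Complex.I * (t - a))) := by
  have hE : Complex.exp (Complex.I * a) * (1 - Complex.exp (Complex.I * (t - a))) =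
      Complex.exp (Complex.I * a) - Complex.exp (Complex.I * t) := by
    rw [mul_sub, mul_one, ← Complex.exp_add]
    congr 2
    ring
  rw [← hE, div_mul_eq_div_div_swap, div_right_comm, div_self (Complex.exp_ne_zero _)]

open Complex Finset in
private lemma phi_eq (n : ℕ) (θ : Fin n → ℝ) (μ : Fin n → ℂ) (ν : ℂ)
    (hsum : (∑ j, ‖μ j‖^2) + ‖ν‖^2 = 1) (t : ℝ)
    (h0 : Real.sin (t/2) ≠ 0) (hk : ∀ k, Real.sin ((t - θ k)/2) ≠ 0) :
    (∑ k, (‖μ k‖^2 : ℂ) * (Complex.exp (Complex.I * θ k) /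
        (Complex.exp (Complex.I * θ k) - Complex.exp (Complex.I * t)))) +
      (‖ν - 1‖^2 : ℂ) / (1 - Complex.exp (Complex.I * t))
      - (1 - (starRingEnd ℂ) ν)
    = (Complex.I/2) * (((∑ k, ‖μ k‖^2 * (Real.cos ((t - θ k)/2)/Real.sin ((t - θ k)/2)))
        + ‖ν - 1‖^2 * (Real.cos (t/2)/Real.sin (t/2)) + (-(2*ν.im)) : ℝ) : ℂ) := by
  have hb : ‖ν - 1‖^2 = ‖ν‖^2 - 2*ν.re + 1 := by
    simp [Complex.sq_norm, Complex.normSq_apply, Complex.sub_re,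
      Complex.sub_im]
    ring
  have hterm : ∀ k, (‖μ k‖^2 : ℂ) * (Complex.exp (Complex.I * θ k) /
      (Complex.exp (Complex.I * θ k) - Complex.exp (Complex.I * t)))
      = (‖μ k‖^2 : ℂ)/2 + (Complex.I/2) * ((‖μ k‖^2 * (Real.cos ((t - θ k)/2)
        / Real.sin ((t - θ k)/2)) : ℝ) : ℂ) := by
    intro k
    rw [frac2, show Complex.I * ((t:ℂ) - ((θ k : ℝ):ℂ)) = Complex.I * ((t - θ k : ℝ) : ℂ) by
      push_cast; ring, Lcot (t - θ k) (hk k)]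
    push_cast
    ring
  rw [Finset.sum_congr rfl (fun k _ => hterm k), Finset.sum_add_distrib]
  have hbterm : (‖ν - 1‖^2 : ℂ) / (1 - Complex.exp (Complex.I * t))
      = (‖ν - 1‖^2 : ℂ)/2 + (Complex.I/2) * ((‖ν - 1‖^2 * (Real.cos (t/2)
        / Real.sin (t/2)) : ℝ) : ℂ) := by
    rw [div_eq_mul_one_div, Lcot t h0]
    push_cast
    ring
  rw [hbterm]
  have hK : (starRingEnd ℂ) ν = (ν.re : ℂ) - (ν.im : ℂ) * Complex.I := by
    apply Complex.ext <;> simp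
  have hsumC : ((∑ j, ‖μ j‖^2 : ℝ) : ℂ) + ((‖ν‖^2 : ℝ) : ℂ) = 1 := by exact_mod_cast hsum
  have hbC : ((‖ν - 1‖^2 : ℝ) : ℂ) = ((‖ν‖^2 : ℝ) : ℂ) - 2*(ν.re : ℂ) + 1 := by
    exact_mod_cast congrArg (fun x : ℝ => (x : ℂ)) hb
  have hnormre : ((ν.re : ℂ)) = ((ν.re : ℝ) : ℂ) := rfl
  push_cast
  rw [hK]
  rw [← Finset.sum_div]
  push_cast at hsumC hbC

  rw [← Finset.mul_sum]
  linear_combination (1/2) * hsumC + (1/2) * hbC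


private lemma re_half {w : ℂ} (hw : ‖w‖ = 1) (h1 : w ≠ 1) : ((1 - w)⁻¹).re = 1/2 := by
  have hn : Complex.normSq w = 1 := by
    rw [Complex.normSq_eq_norm_sq, hw]; norm_num
  have hre : w.re ≠ 1 := by
    intro hc
    apply h1
    have him : w.im = 0 := by
      have := Complex.normSq_apply w
      rw [hn, hc] at this
      nlinarith
    exact Complex.ext (by simp [hc]) (by simp [him])
  rw [Complex.inv_re]
  have h2 : Complex.normSq (1 - w) = 2 - 2*w.re := by
    simp [Complex.normSq_apply, Complex.sub_re, Complex.sub_im]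
    nlinarith [Complex.normSq_apply w, hn]
  rw [h2]
  simp [Complex.sub_re]
  rw [div_eq_iff (by intro hc; apply hre; linarith)]
  ring

private lemma re_term {lam z : ℂ} (hl : ‖lam‖ = 1) (hz : ‖z‖ = 1) (hne : z ≠ lam) :
    (lam / (lam - z)).re = 1/2 := by
  have hl0 : lam ≠ 0 := by intro hc; rw [hc] at hl; simp at hl
  have hzl : lam - z ≠ 0 := sub_ne_zero.2 (Ne.symm hne)
  have h1 : lam / (lam - z) = (1 - z/lam)⁻¹ := by
    rw [show (1 : ℂ) - z/lam = (lam - z)/lam by field_simp, inv_div]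
  rw [h1]
  apply re_half
  · rw [norm_div, hl, hz]; norm_num
  · intro hc
    apply hne
    field_simp at hc
    exact hc

open Complex Finset in
private lemma part1 (n : ℕ) (θ : Fin n → ℝ) (μ : Fin n → ℂ) (ν : ℂ)
    (hsum : (∑ j, ‖μ j‖^2) + ‖ν‖^2 = 1) (z : ℂ) (hz : ‖z‖ = 1) (hz1 : z ≠ 1)
    (hzl : ∀ j, z ≠ Complex.exp (Complex.I * θ j)) :
    ((∑ j, (‖μ j‖^2 : ℂ) * (Complex.exp (Complex.I * θ j) /
        (Complex.exp (Complex.I * θ j) - z))) +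
      (‖ν - 1‖^2 : ℂ) / (1 - z) - (1 - (starRingEnd ℂ) ν)).re = 0 := by
  have hb : ‖ν - 1‖^2 = ‖ν‖^2 - 2*ν.re + 1 := by
    simp [Complex.sq_norm, Complex.normSq_apply, Complex.sub_re,
      Complex.sub_im]
    ring
  have hterm : ∀ j, ((‖μ j‖ : ℂ)^2 * (Complex.exp (Complex.I * θ j) /
      (Complex.exp (Complex.I * θ j) - z))).re = ‖μ j‖^2 * (1/2) := by
    intro j
    rw [show ((‖μ j‖ : ℂ))^2 = ((‖μ j‖^2 : ℝ) : ℂ) by push_cast; ring, Complex.re_ofReal_mul]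
    congr 1
    exact re_term (by simp [Complex.norm_exp]) hz (hzl j)
  have hbterm : (((‖ν - 1‖ : ℂ))^2 / (1 - z)).re = ‖ν - 1‖^2 * (1/2) := by
    rw [div_eq_mul_inv, show ((‖ν - 1‖ : ℂ))^2 = ((‖ν - 1‖^2 : ℝ) : ℂ) by push_cast; ring,
      Complex.re_ofReal_mul]
    congr 1
    exact re_half hz hz1
  rw [Complex.sub_re, Complex.add_re, Complex.re_sum]
  rw [Finset.sum_congr rfl (fun j _ => hterm j), hbterm, ← Finset.sum_mul]
  rw [Complex.sub_re, Complex.one_re, Complex.conj_re]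
  nlinarith [hsum, hb]

end PhiAux2

/-- The function `Φ(z) = Σ |μ_j|² λ_j/(λ_j - z) + |ν-1|²/(1-z) - (1 - conj ν)`
takes only purely imaginary values on the unit circle (away from its poles),
and consequently its roots on the unit circle strictly interlace between `1`
and the points `λ_1, …, λ_n`: each of the `n+1` arcs determined by the angles
`0 < θ_1 < ⋯ < θ_n < 2π` contains exactly one root. -/
theorem Phi_purely_imaginary_and_interlacing (n : ℕ)
    (θ : Fin n → ℝ) (hθ0 : ∀ j, 0 < θ j) (hθmono : StrictMono θ)
    (hθtop : ∀ j, θ j < 2 * π)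
    (μ : Fin n → ℂ) (hμ : ∀ j, μ j ≠ 0) (ν : ℂ) (hν : ν ≠ 1)
    (hsum : (∑ j, ‖μ j‖^2) + ‖ν‖^2 = 1) :
    (∀ z : ℂ, ‖z‖ = 1 → z ≠ 1 → (∀ j, z ≠ Complex.exp (Complex.I * θ j)) →
      ((∑ j, (‖μ j‖^2 : ℂ) * (Complex.exp (Complex.I * θ j) /
          (Complex.exp (Complex.I * θ j) - z))) +
        (‖ν - 1‖^2 : ℂ) / (1 - z) - (1 - (starRingEnd ℂ) ν)).re = 0) ∧
    (∀ j : Fin (n+1), ∃! t : ℝ,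
      t ∈ Set.Ioo ((Fin.cons 0 (Fin.snoc θ (2 * π)) : Fin (n+2) → ℝ) j.castSucc)
        ((Fin.cons 0 (Fin.snoc θ (2 * π)) : Fin (n+2) → ℝ) j.succ) ∧
      (∑ k, (‖μ k‖^2 : ℂ) * (Complex.exp (Complex.I * θ k) /
          (Complex.exp (Complex.I * θ k) - Complex.exp (Complex.I * t)))) +
        (‖ν - 1‖^2 : ℂ) / (1 - Complex.exp (Complex.I * t))
        - (1 - (starRingEnd ℂ) ν) = 0) := by
  have two_pi_pos : (0:ℝ) < 2*π := by positivity
  constructor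
  · exact fun z hz hz1 hzl => part1 n θ μ ν hsum z hz hz1 hzl
  intro j
  set c : Fin (n+2) → ℝ := Fin.cons 0 (Fin.snoc θ (2 * π)) with hc
  set g : Fin (n+1) → ℝ := Fin.snoc θ (2 * π) with hg
  have hcg : c = Fin.cons 0 g := rfl
  have hgpos : ∀ i, 0 < g i := by
    intro i
    refine Fin.lastCases ?_ ?_ i
    · rw [hg, Fin.snoc_last]; exact two_pi_pos
    · intro k; rw [hg, Fin.snoc_castSucc]; exact hθ0 k
  have hgsucc : ∀ i : Fin n, θ i < g i.succ := by
    intro i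
    rcases Fin.eq_castSucc_or_eq_last i.succ with ⟨k, hk⟩ | hk
    · rw [hk, hg, Fin.snoc_castSucc]
      apply hθmono
      have hv : (i : ℕ) + 1 = (k : ℕ) := by
        have := congrArg Fin.val hk
        simpa using this
      exact Fin.lt_def.2 (by omega)
    · rw [hk, hg, Fin.snoc_last]
      exact hθtop i
  have hθc : ∀ k : Fin n, c (k.castSucc.succ) = θ k := by
    intro k; rw [hcg, Fin.cons_succ, hg, Fin.snoc_castSucc]
  have hcmono : StrictMono c := by
    rw [Fin.strictMono_iff_lt_succ]
    intro i
    refine Fin.cases ?_ ?_ i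
    · rw [Fin.castSucc_zero, hcg, Fin.cons_zero, Fin.cons_succ]
      exact hgpos 0
    · intro i'
      rw [← Fin.succ_castSucc, hθc i', hcg, Fin.cons_succ]
      exact hgsucc i'
  have hαβ : c j.castSucc < c j.succ := hcmono (Fin.castSucc_lt_succ (i := j))
  have hα0 : 0 ≤ c j.castSucc := by
    have h := hcmono.monotone (Fin.zero_le j.castSucc)
    rwa [hcg, Fin.cons_zero] at h
  have hclast : c (Fin.last (n+1)) = 2*π := by
    rw [show (Fin.last (n+1) : Fin (n+2)) = (Fin.last n).succ from (Fin.succ_last n).symm,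
      hcg, Fin.cons_succ, hg, Fin.snoc_last]
  have hβtop : c j.succ ≤ 2*π := by
    have h := hcmono.monotone (Fin.le_last j.succ)
    rwa [hclast] at h
  have h1 : ∀ k : Fin n, θ k ≤ c j.castSucc ∨ c j.succ ≤ θ k := by
    intro k
    rcases le_or_gt (k.castSucc.succ) j.castSucc with h | h
    · left; have h' := hcmono.monotone h; rwa [hθc k] at h'
    · right
      have h2 : j.succ ≤ k.castSucc.succ := Fin.castSucc_lt_iff_succ_le.1 h
      have h' := hcmono.monotone h2; rwa [hθc k] at h'
  set a : Fin (n+1) → ℝ := Fin.cons (‖ν - 1‖^2) (fun k => ‖μ k‖^2) with hA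
  set p : Fin (n+1) → ℝ := Fin.cons 0 θ with hp
  have hνne : (0:ℝ) < ‖ν - 1‖^2 := pow_pos (norm_pos_iff.2 (sub_ne_zero.2 hν)) 2
  have ha : ∀ k, 0 < a k := by
    intro k
    refine Fin.cases ?_ ?_ k
    · rw [hA, Fin.cons_zero]; exact hνne
    · intro k'; rw [hA, Fin.cons_succ]; exact pow_pos (norm_pos_iff.2 (hμ k')) 2
  have hp0 : p 0 = 0 := by rw [hp, Fin.cons_zero]
  have hps : ∀ k, p (Fin.succ k) = θ k := fun k => by rw [hp, Fin.cons_succ]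
  have h1' : ∀ k, p k ≤ c j.castSucc ∨ c j.succ ≤ p k := by
    intro k
    refine Fin.cases ?_ ?_ k
    · left; rw [hp0]; exact hα0
    · intro k'; rw [hps]; exact h1 k'
  have h2' : ∀ k, c j.succ ≤ p k + 2*π := by
    intro k
    refine Fin.cases ?_ ?_ k
    · rw [hp0]; linarith
    · intro k'; rw [hps]; linarith [hθ0 k']
  have h3' : ∀ k, p k < c j.castSucc + 2*π := by
    intro k
    refine Fin.cases ?_ ?_ k
    · rw [hp0]; linarith
    · intro k'; rw [hps]; linarith [hθtop k']
  have h4 : ∃ k₀, p k₀ = c j.castSucc ∧ ∀ k, k ≠ k₀ → p k ≠ c j.castSucc := by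
    refine Fin.cases ?_ ?_ j
    · refine ⟨0, ?_, ?_⟩
      · rw [hp0, Fin.castSucc_zero, hcg, Fin.cons_zero]
      · intro k
        refine Fin.cases ?_ ?_ k
        · intro hk; exact absurd rfl hk
        · intro k' _
          rw [hps, Fin.castSucc_zero, hcg, Fin.cons_zero]
          exact ne_of_gt (hθ0 k')
    · intro i
      have hα : c (Fin.succ i).castSucc = θ i := by rw [← Fin.succ_castSucc, hθc i]
      refine ⟨Fin.succ i, ?_, ?_⟩
      · rw [hps, hα]
      · intro k
        refine Fin.cases ?_ ?_ k
        · intro _; rw [hp0, hα]; exact ne_of_lt (hθ0 i)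
        · intro k' hk
          rw [hps, hα]
          exact fun hcc => hk (congrArg Fin.succ (hθmono.injective hcc))
  have h5 : ∃ k₁, (p k₁ = c j.succ ∨ p k₁ = c j.succ - 2*π) ∧
      ∀ k, k ≠ k₁ → p k ≠ c j.succ ∧ p k ≠ c j.succ - 2*π := by
    refine Fin.lastCases ?_ ?_ j
    · have hβ : c ((Fin.last n).succ) = 2*π := by rw [hcg, Fin.cons_succ, hg, Fin.snoc_last]
      refine ⟨0, Or.inr (by rw [hp0, hβ]; ring), ?_⟩
      intro k
      refine Fin.cases ?_ ?_ k
      · intro hk; exact absurd rfl hk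
      · intro k' _
        rw [hps, hβ]
        exact ⟨ne_of_lt (hθtop k'), by intro hcc; have := hθ0 k'; linarith⟩
    · intro i
      have hβ : c ((i.castSucc).succ) = θ i := hθc i
      refine ⟨Fin.succ i, Or.inl (by rw [hps, hβ]), ?_⟩
      intro k
      refine Fin.cases ?_ ?_ k
      · intro _
        rw [hp0, hβ]
        exact ⟨ne_of_lt (hθ0 i), by intro hcc; have := hθtop i; have := hθ0 i; linarith⟩
      · intro k' hk
        rw [hps, hβ]
        refine ⟨fun hcc => hk (congrArg Fin.succ (hθmono.injective hcc)), fun hcc => ?_⟩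
        have := hθ0 k'; have := hθtop i; linarith
  have HU := core (n+1) a p ha (-(2*ν.im)) (c j.castSucc) (c j.succ) hαβ h1' h2' h3' h4 h5
  have hEq : ∀ t ∈ Set.Ioo (c j.castSucc) (c j.succ),
      (∑ k, (‖μ k‖^2 : ℂ) * (Complex.exp (Complex.I * θ k) /
          (Complex.exp (Complex.I * θ k) - Complex.exp (Complex.I * t)))) +
        (‖ν - 1‖^2 : ℂ) / (1 - Complex.exp (Complex.I * t))
        - (1 - (starRingEnd ℂ) ν)
      = (Complex.I/2) * ((((∑ k, a k * (Real.cos ((t - p k)/2) / Real.sin ((t - p k)/2))) +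
          (-(2*ν.im))) : ℝ) : ℂ) := by
    intro t ht
    have ht0 : 0 < t := lt_of_le_of_lt hα0 ht.1
    have httop : t < 2*π := lt_of_lt_of_le ht.2 hβtop
    have h0 : Real.sin (t/2) ≠ 0 :=
      sin_half_ne t (by linarith) httop (ne_of_gt ht0)
    have hks : ∀ k : Fin n, Real.sin ((t - θ k)/2) ≠ 0 := by
      intro k
      refine sin_half_ne _ (by linarith [hθtop k]) (by linarith [hθ0 k]) ?_
      rcases h1 k with h | h
      · have hlt : θ k < t := lt_of_le_of_lt h ht.1
        exact sub_ne_zero.2 hlt.ne'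
      · have hlt : t < θ k := lt_of_lt_of_le ht.2 h
        exact sub_ne_zero.2 hlt.ne
    rw [phi_eq n θ μ ν hsum t h0 hks]
    congr 1
    rw [Complex.ofReal_inj]
    have hSS : (∑ k : Fin (n+1), a k * (Real.cos ((t - p k)/2) / Real.sin ((t - p k)/2)))
        = (∑ k : Fin n, ‖μ k‖^2 * (Real.cos ((t - θ k)/2) / Real.sin ((t - θ k)/2)))
          + ‖ν - 1‖^2 * (Real.cos (t/2) / Real.sin (t/2)) := by
      rw [Fin.sum_univ_succ, hp0, hA, hp]
      simp only [Fin.cons_zero, Fin.cons_succ, sub_zero]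
      ring
    linarith [hSS]
  refine (existsUnique_congr (fun t => ?_)).1 HU
  constructor
  · rintro ⟨ht, hS⟩
    refine ⟨ht, ?_⟩
    rw [hEq t ht, hS]
    simp
  · rintro ⟨ht, hE⟩
    refine ⟨ht, ?_⟩
    rw [hEq t ht] at hE
    rcases mul_eq_zero.1 hE with h | h
    · exfalso
      have := Complex.I_ne_zero
      rw [div_eq_zero_iff] at h
      rcases h with h | h
      · exact this h
      · norm_num at h
    · exact_mod_cast h
end
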